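/- Let D : ℝ^{d×N} → ℝ^{d×N} be C¹ with |D(T)| ≤ C₂ for all T, and uniformly h-monotone with a positive nonincreasing continuous function h : [0,∞) → (0,∞), i.e. h(|T|)|B|² ≤ (B,B)_{A(T)} for all T, B. Suppose G ∈ ℝ^{d×N} satisfies G = D(T₀) for some T₀ with |T₀| ≤ C. Then liminf_{n→∞} inf_{T ∈ ℝ^{d×N}, |T|=1} (D(nT) − G) · T ≥ h(C+1) > 0. -/

import Mathlib

open MeasureTheory Filter Topology Set

noncomputable section
abbrev Mat (d N : ℕ) := EuclideanSpace ℝ (Fin d × Fin N)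

lemma mono_seg {d N : ℕ} (D : Mat d N → Mat d N) (hD : ContDiff ℝ 1 D)
    (h : ℝ → ℝ) (hpos : ∀ s : ℝ, 0 ≤ s → 0 < h s)
    (hanti : AntitoneOn h (Set.Ici 0))
    (hmon : ∀ T B : Mat d N, h ‖T‖ * ‖B‖ ^ 2 ≤ (inner ℝ (fderiv ℝ D T B) B : ℝ))
    (C : ℝ) (T₀ V : Mat d N) (hT₀ : ‖T₀‖ ≤ C) (hV : 1 ≤ ‖V‖) :
    h (C + 1) * ‖V‖ ≤ (inner ℝ (D (T₀ + V) - D T₀) V : ℝ) := by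
  have hC : 0 ≤ C := le_trans (norm_nonneg _) hT₀
  have hdiff : Differentiable ℝ D := hD.differentiable one_ne_zero
  set g : ℝ → ℝ := fun s => (inner ℝ (D (T₀ + s • V)) V : ℝ) with hg_def
  set g' : ℝ → ℝ := fun s => (inner ℝ (fderiv ℝ D (T₀ + s • V) V) V : ℝ) with hg'_def
  have hg : ∀ s : ℝ, HasDerivAt g (g' s) s := by
    intro s
    have h1 : HasDerivAt (fun s : ℝ => T₀ + s • V) V s := by
      simpa using ((hasDerivAt_id s).smul_const V).const_add T₀
    have h2 := (hdiff (T₀ + s • V)).hasFDerivAt.comp_hasDerivAt s h1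
    have h3 := h2.inner ℝ (hasDerivAt_const s V)
    simpa using h3
  have hcontγ : Continuous (fun s : ℝ => T₀ + s • V) := by continuity
  have hcontg' : Continuous g' := by
    have := (hD.continuous_fderiv one_ne_zero).comp hcontγ
    exact (this.clm_apply continuous_const).inner continuous_const
  set s₀ : ℝ := ‖V‖⁻¹ with hs₀_def
  have hVpos : (0:ℝ) < ‖V‖ := lt_of_lt_of_le one_pos hV
  have hs₀pos : 0 < s₀ := inv_pos.mpr hVpos
  have hs₀le : s₀ ≤ 1 := by
    rw [hs₀_def]
    exact inv_le_one_of_one_le₀ hV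
  have hint1 : IntervalIntegrable g' volume 0 s₀ := hcontg'.intervalIntegrable _ _
  have hint2 : IntervalIntegrable g' volume s₀ 1 := hcontg'.intervalIntegrable _ _
  have hftc : g 1 - g 0 = ∫ s in (0:ℝ)..1, g' s :=
    (intervalIntegral.integral_eq_sub_of_hasDerivAt (fun s _ => hg s)
      (hcontg'.intervalIntegrable _ _)).symm
  have hsplit : (∫ s in (0:ℝ)..1, g' s) = (∫ s in (0:ℝ)..s₀, g' s) + ∫ s in s₀..(1:ℝ), g' s :=
    (intervalIntegral.integral_add_adjacent_intervals hint1 hint2).symm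
  have hg'nonneg : ∀ s : ℝ, 0 ≤ g' s := by
    intro s
    refine le_trans ?_ (hmon _ V)
    exact mul_nonneg (hpos _ (norm_nonneg _)).le (sq_nonneg _)
  have hpos2 : 0 ≤ ∫ s in s₀..(1:ℝ), g' s :=
    intervalIntegral.integral_nonneg hs₀le (fun s _ => hg'nonneg s)
  have hlow : ∀ s ∈ Set.Icc (0:ℝ) s₀, h (C+1) * ‖V‖^2 ≤ g' s := by
    intro s hs
    have hγ : ‖T₀ + s • V‖ ≤ C + 1 := by
      calc ‖T₀ + s • V‖ ≤ ‖T₀‖ + ‖s • V‖ := norm_add_le _ _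
        _ ≤ C + 1 := by
          have : ‖s • V‖ = s * ‖V‖ := by
            rw [norm_smul, Real.norm_eq_abs, abs_of_nonneg hs.1]
          rw [this]
          have : s * ‖V‖ ≤ s₀ * ‖V‖ := by
            exact mul_le_mul_of_nonneg_right hs.2 (norm_nonneg _)
          have h2 : s₀ * ‖V‖ = 1 := inv_mul_cancel₀ (ne_of_gt hVpos)
          nlinarith [hT₀]
    have hh : h (C + 1) ≤ h ‖T₀ + s • V‖ := by
      refine hanti (Set.mem_Ici.mpr (norm_nonneg _)) (Set.mem_Ici.mpr (by linarith)) hγ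
    calc h (C+1) * ‖V‖^2 ≤ h ‖T₀ + s • V‖ * ‖V‖^2 := by nlinarith [sq_nonneg ‖V‖]
      _ ≤ g' s := hmon _ V
  have hbound1 : h (C+1) * ‖V‖ ≤ ∫ s in (0:ℝ)..s₀, g' s := by
    have := intervalIntegral.integral_mono_on hs₀pos.le
      ((continuous_const : Continuous fun _ : ℝ => h (C+1) * ‖V‖^2).intervalIntegrable _ _)
      hint1 hlow
    have hconst : (∫ _ in (0:ℝ)..s₀, h (C+1) * ‖V‖^2) = s₀ * (h (C+1) * ‖V‖^2) := by
      simp [intervalIntegral.integral_const, smul_eq_mul]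
      ring
    rw [hconst] at this
    have hss : s₀ * ‖V‖ = 1 := inv_mul_cancel₀ hVpos.ne'
    have : s₀ * (h (C+1) * ‖V‖^2) = h (C+1) * ‖V‖ := by
      linear_combination (h (C+1) * ‖V‖) * hss
    linarith [intervalIntegral.integral_mono_on hs₀pos.le
      ((continuous_const : Continuous fun _ : ℝ => h (C+1) * ‖V‖^2).intervalIntegrable _ _)
      hint1 hlow, hconst, this]
  have hsum : h (C+1) * ‖V‖ ≤ g 1 - g 0 := by
    rw [hftc, hsplit]; linarith
  have : g 1 - g 0 = (inner ℝ (D (T₀ + V) - D T₀) V : ℝ) := by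
    simp [hg_def, inner_sub_left]
  linarith [hsum, this.symm.le, this.le]

/-- Let `D : ℝ^{d×N} → ℝ^{d×N}` be `C¹`, bounded by `C₂`, and uniformly `h`-monotone.
If `G = D(T₀)` with `|T₀| ≤ C`, then
`liminf_{n→∞} inf_{|T|=1} (D(nT) − G)·T ≥ h(C+1) > 0`. -/
theorem safety_condition_of_range_representation (d N : ℕ) (hd : 1 ≤ d) (hN : 1 ≤ N)
    (D : Mat d N → Mat d N) (hD : ContDiff ℝ 1 D)
    (C₂ : ℝ) (hC₂ : 0 < C₂) (hbdd : ∀ T : Mat d N, ‖D T‖ ≤ C₂)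
    (h : ℝ → ℝ)
    (hpos : ∀ s : ℝ, 0 ≤ s → 0 < h s)
    (hanti : AntitoneOn h (Set.Ici 0))
    (hcont : ContinuousOn h (Set.Ici 0))
    (hmon : ∀ T B : Mat d N, h ‖T‖ * ‖B‖ ^ 2 ≤ (inner ℝ (fderiv ℝ D T B) B : ℝ))
    (G : Mat d N) (C : ℝ) (T₀ : Mat d N) (hT₀ : ‖T₀‖ ≤ C) (hG : G = D T₀) :
    h (C + 1) ≤ Filter.liminf (fun n : ℕ =>
        ⨅ T : Metric.sphere (0 : Mat d N) 1,
          (inner ℝ (D ((n : ℝ) • (T : Mat d N)) - G) (T : Mat d N) : ℝ)) Filter.atTop ∧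
      0 < h (C + 1) := by
  have hC : 0 ≤ C := le_trans (norm_nonneg _) hT₀
  have hK : 0 < h (C + 1) := hpos _ (by linarith)
  refine ⟨?_, hK⟩
  set K := h (C + 1) with hK_def
  have hne : Nonempty (Metric.sphere (0 : Mat d N) 1) := by
    refine ⟨⟨EuclideanSpace.single (⟨0, hd⟩, ⟨0, hN⟩) (1 : ℝ), ?_⟩⟩
    simp [EuclideanSpace.norm_single]
  set f : ℕ → ℝ := fun n =>
    ⨅ T : Metric.sphere (0 : Mat d N) 1,
      (inner ℝ (D ((n : ℝ) • (T : Mat d N)) - G) (T : Mat d N) : ℝ) with hf_def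
  have hGb : ‖G‖ ≤ C₂ := by rw [hG]; exact hbdd T₀
  have hXb : ∀ (n : ℕ) (T : Mat d N), ‖D ((n : ℝ) • T) - G‖ ≤ 2 * C₂ := by
    intro n T
    calc ‖D ((n : ℝ) • T) - G‖ ≤ ‖D ((n : ℝ) • T)‖ + ‖G‖ := norm_sub_le _ _
      _ ≤ 2 * C₂ := by linarith [hbdd ((n : ℝ) • T)]
  have hterm_lb : ∀ (n : ℕ) (T : Metric.sphere (0 : Mat d N) 1),
      -(2 * C₂) ≤ (inner ℝ (D ((n : ℝ) • (T : Mat d N)) - G) (T : Mat d N) : ℝ) := by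
    intro n T
    have hTn : ‖(T : Mat d N)‖ = 1 := by
      have := T.2
      simpa [mem_sphere_zero_iff_norm] using this
    have h1 := abs_real_inner_le_norm (D ((n : ℝ) • (T : Mat d N)) - G) (T : Mat d N)
    have h2 := hXb n T
    rw [hTn, mul_one] at h1
    have := abs_le.mp h1
    linarith [this.1]
  have hf_lb : ∀ n, -(2 * C₂) ≤ f n := fun n => le_ciInf (hterm_lb n)
  set b : ℕ → ℝ := fun n => K - (K * C + 2 * C₂ * C) / n with hb_def
  have hbtend : Tendsto b atTop (𝓝 K) := by
    have h0 : Tendsto (fun n : ℕ => 1 / (n : ℝ)) atTop (𝓝 0) :=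
      tendsto_one_div_atTop_nhds_zero_nat
    have h1 : Tendsto (fun n : ℕ => K - (K * C + 2 * C₂ * C) * (1 / (n : ℝ))) atTop
        (𝓝 (K - (K * C + 2 * C₂ * C) * 0)) :=
      Tendsto.sub tendsto_const_nhds (h0.const_mul _)
    simpa [hb_def, div_eq_mul_inv, mul_comm, mul_assoc, mul_left_comm] using h1
  have hev : ∀ᶠ n in atTop, b n ≤ f n := by
    rw [eventually_atTop]
    refine ⟨⌈C⌉₊ + 1, fun n hn => ?_⟩
    have hnC : C + 1 ≤ (n : ℝ) := by
      have h1 : ((⌈C⌉₊ + 1 : ℕ) : ℝ) ≤ (n : ℝ) := Nat.cast_le.mpr hn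
      have h2 : C ≤ (⌈C⌉₊ : ℝ) := Nat.le_ceil C
      push_cast at h1
      linarith
    have hnpos : (0 : ℝ) < n := by linarith
    refine le_ciInf fun T => ?_
    have hTn : ‖(T : Mat d N)‖ = 1 := by
      have := T.2
      simpa [mem_sphere_zero_iff_norm] using this
    set V : Mat d N := (n : ℝ) • (T : Mat d N) - T₀ with hV_def
    have hVnorm : (n : ℝ) - C ≤ ‖V‖ := by
      have h1 : ‖(n : ℝ) • (T : Mat d N)‖ - ‖T₀‖ ≤ ‖V‖ := norm_sub_norm_le _ _
      have h2 : ‖(n : ℝ) • (T : Mat d N)‖ = n := by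
        rw [norm_smul, hTn, mul_one, Real.norm_eq_abs, abs_of_pos hnpos]
      linarith
    have hV1 : 1 ≤ ‖V‖ := by linarith
    have hseg := mono_seg D hD h hpos hanti hmon C T₀ V hT₀ hV1
    have hTV : T₀ + V = (n : ℝ) • (T : Mat d N) := by
      rw [hV_def]; abel
    rw [hTV, ← hG] at hseg
    set X : Mat d N := D ((n : ℝ) • (T : Mat d N)) - G with hX_def
    have hXT₀ : -(2 * C₂ * C) ≤ (inner ℝ X T₀ : ℝ) := by
      have h1 := abs_real_inner_le_norm X T₀
      have h2 := hXb n (T : Mat d N)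
      rw [← hX_def] at h2
      have h3 := abs_le.mp h1
      nlinarith [norm_nonneg X, norm_nonneg T₀, h3.1]
    have hsmul : (inner ℝ X ((n : ℝ) • (T : Mat d N)) : ℝ) = (n : ℝ) * inner ℝ X (T : Mat d N) :=
      real_inner_smul_right _ _ _
    have hadd : (inner ℝ X ((n : ℝ) • (T : Mat d N)) : ℝ) = inner ℝ X V + inner ℝ X T₀ := by
      rw [← hTV, inner_add_right]
      ring
    have hXV : K * ((n : ℝ) - C) ≤ (inner ℝ X V : ℝ) := by
      have : K * ((n : ℝ) - C) ≤ K * ‖V‖ := by nlinarith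
      linarith [hseg]
    have hmain : K * ((n : ℝ) - C) - 2 * C₂ * C ≤ (n : ℝ) * inner ℝ X (T : Mat d N) := by
      rw [← hsmul, hadd]; linarith
    have hbn : b n = (K * ((n : ℝ) - C) - 2 * C₂ * C) / n := by
      rw [hb_def]
      field_simp
      ring
    rw [hbn, div_le_iff₀ hnpos]
    linarith [hmain]
  have hterm_ub : ∀ (n : ℕ) (T : Metric.sphere (0 : Mat d N) 1),
      (inner ℝ (D ((n : ℝ) • (T : Mat d N)) - G) (T : Mat d N) : ℝ) ≤ 2 * C₂ := by
    intro n T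
    have hTn : ‖(T : Mat d N)‖ = 1 := by
      have := T.2
      simpa [mem_sphere_zero_iff_norm] using this
    have h1 := abs_real_inner_le_norm (D ((n : ℝ) • (T : Mat d N)) - G) (T : Mat d N)
    have h2 := hXb n T
    rw [hTn, mul_one] at h1
    linarith [(abs_le.mp h1).2]
  have hf_ub : ∀ n, f n ≤ 2 * C₂ := by
    intro n
    obtain ⟨T⟩ := hne
    have hbb : BddBelow (Set.range fun T : Metric.sphere (0 : Mat d N) 1 =>
        (inner ℝ (D ((n : ℝ) • (T : Mat d N)) - G) (T : Mat d N) : ℝ)) := by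
      refine ⟨-(2 * C₂), ?_⟩
      rintro x ⟨T', rfl⟩
      exact hterm_lb n T'
    exact le_trans (ciInf_le hbb T) (hterm_ub n T)
  have hu : IsBoundedUnder (· ≥ ·) atTop b := hbtend.isBoundedUnder_ge
  have hv : IsCoboundedUnder (· ≥ ·) atTop f := by
    have : IsBoundedUnder (· ≤ ·) atTop f :=
      ⟨2 * C₂, Filter.eventually_map.mpr (Filter.Eventually.of_forall hf_ub)⟩
    exact this.isCoboundedUnder_ge
  have h1 : liminf b atTop ≤ liminf f atTop := liminf_le_liminf hev hu hv
  rwa [hbtend.liminf_eq] at h1
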